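/- For each integer ℓ ≥ 2 let n_ℓ := ℓ·⌈(ln ℓ)²⌉ + 1, θ_ℓ := π/(2(n_ℓ−1)), α := ∑_{m=2}^∞ 1/(m (ln m)²), and δ_ℓ := 1/(α·ℓ·(ln ℓ)²). Then for every ℓ ≥ 2 and every 0 ≤ j ≤ n_ℓ−2, one has 0 ≤ δ_ℓ·cot((j+1)θ_ℓ) ≤ 1; equivalently, z_{ℓ,j} := 1 − δ_ℓ·cot((j+1)θ_ℓ) lies in [0,1]. -/

import Mathlib

open scoped BigOperators ENNReal NNReal

noncomputable section

namespace Stmt12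

/-- `n_ℓ := ℓ·⌈(ln ℓ)²⌉ + 1`. -/
def nl (l : ℕ) : ℕ := l * ⌈(Real.log l) ^ 2⌉₊ + 1

/-- `θ_ℓ := π / (2(n_ℓ − 1))`. -/
def θ (l : ℕ) : ℝ := Real.pi / (2 * ((nl l : ℝ) - 1))

/-- `α := ∑_{m=2}^∞ 1/(m (ln m)²)`. -/
def α : ℝ := ∑' m : ℕ, if 2 ≤ m then 1 / (m * (Real.log m) ^ 2) else 0

/-- `δ_ℓ := 1/(α ℓ (ln ℓ)²)`. -/
def δ (l : ℕ) : ℝ := 1 / (α * l * (Real.log l) ^ 2)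

/-- `cot x := cos x / sin x`. -/
def cot (x : ℝ) : ℝ := Real.cos x / Real.sin x

set_option maxHeartbeats 1000000 in
theorem stmt12 (l : ℕ) (hl : 2 ≤ l) (j : ℕ) (hj : j ≤ nl l - 2) :
    0 ≤ δ l * cot (((j : ℝ) + 1) * θ l) ∧ δ l * cot (((j : ℝ) + 1) * θ l) ≤ 1 := by
  set f : ℕ → ℝ := fun m => if 2 ≤ m then 1 / (m * (Real.log m) ^ 2) else 0 with hf
  have hfnn : ∀ m, 0 ≤ f m := by
    intro m
    simp only [hf]
    split <;> positivity
  set A := Real.log l with hA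
  have hA0 : 0 < A := Real.log_pos (by exact_mod_cast by omega)
  have hy0 : 0 < A ^ 2 := by positivity
  have hC1 : 1 ≤ ⌈A ^ 2⌉₊ := Nat.one_le_ceil_iff.mpr hy0
  set C : ℝ := (⌈A ^ 2⌉₊ : ℝ) with hCdef
  have hC0 : (1 : ℝ) ≤ C := by rw [hCdef]; exact_mod_cast hC1
  have hl0 : (0 : ℝ) < l := by positivity
  set N : ℝ := (l : ℝ) * C with hNdef
  have hN0 : 0 < N := by positivity
  have hNval : ((nl l : ℝ) - 1) = N := by
    simp [nl, hNdef, hCdef, hA]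
  have hθ : θ l = Real.pi / (2 * N) := by rw [θ, hNval]
  have hπ : (3.141592 : ℝ) < Real.pi := Real.pi_gt_d6
  have hθ0 : 0 < θ l := by
    rw [hθ]; positivity
  set x := ((j : ℝ) + 1) * θ l with hxdef
  have hx0 : 0 < x := by positivity
  -- j + 1 ≤ l * ⌈A²⌉₊ as naturals
  have hjn : (j : ℝ) + 1 ≤ N := by
    have h1 : 1 ≤ l * ⌈A ^ 2⌉₊ := Nat.one_le_iff_ne_zero.mpr (by positivity)
    have h2 : j + 1 ≤ l * ⌈A ^ 2⌉₊ := by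
      have : nl l - 2 = l * ⌈A ^ 2⌉₊ - 1 := by simp [nl, hA]
      omega
    have := (Nat.cast_le (α := ℝ)).mpr h2
    push_cast at this
    rw [hNdef, hCdef]
    exact_mod_cast this
  have hxle : x ≤ Real.pi / 2 := by
    have hπ0 : (0 : ℝ) ≤ Real.pi / (2 * N) := by positivity
    calc x = ((j : ℝ) + 1) * (Real.pi / (2 * N)) := by rw [hxdef, hθ]
      _ ≤ N * (Real.pi / (2 * N)) := mul_le_mul_of_nonneg_right hjn hπ0
      _ = Real.pi / 2 := by field_simp
  -- cot is nonneg and ≤ 1/x on (0, π/2]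
  have hsin : 0 < Real.sin x :=
    Real.sin_pos_of_pos_of_lt_pi hx0 (lt_of_le_of_lt hxle (by linarith [Real.pi_pos]))
  have hcos : 0 ≤ Real.cos x :=
    Real.cos_nonneg_of_mem_Icc ⟨by linarith [Real.pi_pos], hxle⟩
  have hcot0 : 0 ≤ cot x := div_nonneg hcos hsin.le
  have hcotle : cot x ≤ 1 / x := by
    rcases lt_or_eq_of_le hxle with h | h
    · have hcos' : 0 < Real.cos x := Real.cos_pos_of_mem_Ioo ⟨by linarith [Real.pi_pos], h⟩
      have htan := Real.lt_tan hx0 h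
      rw [Real.tan_eq_sin_div_cos, lt_div_iff₀ hcos'] at htan
      rw [cot, div_le_div_iff₀ hsin hx0]
      nlinarith
    · rw [cot, h, Real.cos_pi_div_two]
      rw [zero_div]
      positivity
  -- α is nonnegative
  have hα0 : 0 ≤ α := tsum_nonneg hfnn
  have hδ0 : 0 ≤ δ l := by
    rw [δ]
    positivity
  refine ⟨mul_nonneg hδ0 hcot0, ?_⟩
  by_cases hs : Summable f
  · -- lower bound on α
    have hL1 : (0.6931471803 : ℝ) < Real.log 2 := Real.log_two_gt_d9
    have hL2 : Real.log 2 < 0.6931471808 := Real.log_two_lt_d9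
    have hL0 : (0 : ℝ) < Real.log 2 := by linarith
    have hlog4 : Real.log 4 = 2 * Real.log 2 := by
      rw [show (4 : ℝ) = 2 ^ 2 by norm_num, Real.log_pow]; push_cast; ring
    have hlog3 : Real.log 3 ≤ 2 * Real.log 2 := by
      rw [← hlog4]; exact Real.log_le_log (by norm_num) (by norm_num)
    have hlog3' : 0 < Real.log 3 := Real.log_pos (by norm_num)
    have hlog5 : Real.log 5 ≤ 3 * Real.log 2 := by
      have : Real.log 8 = 3 * Real.log 2 := by
        rw [show (8 : ℝ) = 2 ^ 3 by norm_num, Real.log_pow]; push_cast; ring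
      rw [← this]; exact Real.log_le_log (by norm_num) (by norm_num)
    have hlog5' : 0 < Real.log 5 := Real.log_pos (by norm_num)
    have hpartial : ∑ i ∈ Finset.range 6, f i ≤ α := Summable.sum_le_tsum _ (fun i _ => hfnn i) hs
    have hsumval : ∑ i ∈ Finset.range 6, f i =
        1 / (2 * Real.log 2 ^ 2) + 1 / (3 * Real.log 3 ^ 2)
          + 1 / (4 * Real.log 4 ^ 2) + 1 / (5 * Real.log 5 ^ 2) := by
      norm_num [hf, Finset.sum_range_succ]
    set L := Real.log 2 with hLdef
    have ht3 : 1 / (12 * L ^ 2) ≤ 1 / (3 * Real.log 3 ^ 2) := by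
      rw [div_le_div_iff₀ (by positivity) (by positivity)]
      nlinarith
    have ht4 : 1 / (16 * L ^ 2) ≤ 1 / (4 * Real.log 4 ^ 2) := by
      rw [hlog4]
      apply le_of_eq
      ring
    have ht5 : 1 / (45 * L ^ 2) ≤ 1 / (5 * Real.log 5 ^ 2) := by
      have h9 : Real.log 5 ^ 2 ≤ 9 * L ^ 2 := by
        nlinarith [mul_le_mul hlog5 hlog5 hlog5'.le (by linarith : (0:ℝ) ≤ 3 * L)]
      rw [div_le_div_iff₀ (by positivity) (by positivity)]
      linarith
    have hcomb : (1.38 : ℝ) ≤ 481 / (720 * L ^ 2) := by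
      rw [le_div_iff₀ (by positivity)]
      nlinarith
    have hsplit : (481 : ℝ) / (720 * L ^ 2)
        = 1 / (2 * L ^ 2) + 1 / (12 * L ^ 2) + 1 / (16 * L ^ 2) + 1 / (45 * L ^ 2) := by
      field_simp
      ring
    have hα : (1.38 : ℝ) ≤ α := by
      calc (1.38 : ℝ) ≤ 481 / (720 * L ^ 2) := hcomb
        _ = 1 / (2 * L ^ 2) + 1 / (12 * L ^ 2) + 1 / (16 * L ^ 2) + 1 / (45 * L ^ 2) := hsplit
        _ ≤ 1 / (2 * Real.log 2 ^ 2) + 1 / (3 * Real.log 3 ^ 2)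
            + 1 / (4 * Real.log 4 ^ 2) + 1 / (5 * Real.log 5 ^ 2) := by
          gcongr 1 / (2 * L ^ 2) + ?_ + ?_ + ?_ <;> assumption
        _ = ∑ i ∈ Finset.range 6, f i := hsumval.symm
        _ ≤ α := hpartial
    -- key numeric inequality: 2C ≤ 1.38 π A²
    have hkey : 2 * C ≤ 1.38 * Real.pi * A ^ 2 := by
      rcases eq_or_lt_of_le hl with h2 | h3
      · -- l = 2
        have hA2 : A = L := by rw [hA, ← h2]; norm_num [hLdef]
        have hylt : A ^ 2 ≤ 1 := by rw [hA2]; nlinarith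
        have hCle : ⌈A ^ 2⌉₊ ≤ 1 := by
          rw [Nat.ceil_le]
          push_cast
          exact hylt
        have hCeq : ⌈A ^ 2⌉₊ = 1 := le_antisymm hCle hC1
        have hy48 : (0.48 : ℝ) ≤ A ^ 2 := by rw [hA2]; nlinarith
        rw [hCdef, hCeq]
        have hprod : (0 : ℝ) ≤ (Real.pi - 3.141592) * (A ^ 2 - 0.48) := by
          apply mul_nonneg <;> linarith
        push_cast
        nlinarith only [hprod, hy48, hπ]
      · -- 3 ≤ l
        have hA1 : 1 ≤ A := by
          rw [hA, Real.le_log_iff_exp_le (by positivity)]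
          have h9 : Real.exp 1 < 2.7182818286 := Real.exp_one_lt_d9
          have : (3 : ℝ) ≤ l := by exact_mod_cast h3
          linarith
        have hy1 : 1 ≤ A ^ 2 := by nlinarith only [hA1]
        have hceil : C < A ^ 2 + 1 := by
          rw [hCdef]
          exact Nat.ceil_lt_add_one (by positivity)
        have hpA : (0 : ℝ) ≤ (Real.pi - 3.141592) * A ^ 2 :=
          mul_nonneg (by linarith) (by positivity)
        nlinarith only [hceil, hy1, hpA, hπ, hC0]
    have hαpos : 0 < α := lt_of_lt_of_le (by norm_num) hα
    -- main chain
    have hδval : δ l = 1 / (α * l * A ^ 2) := rfl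
    have hD0 : 0 < α * l * A ^ 2 := by positivity
    have hxlow : Real.pi / (2 * N) ≤ x := by
      rw [hxdef, hθ]
      refine le_mul_of_one_le_left (by positivity) ?_
      have := Nat.cast_nonneg (α := ℝ) j
      linarith only [this]
    have hinv : 1 / x ≤ 2 * N / Real.pi := by
      have h1 : 1 / x ≤ 1 / (Real.pi / (2 * N)) :=
        one_div_le_one_div_of_le (by positivity) hxlow
      have h2 : 1 / (Real.pi / (2 * N)) = 2 * N / Real.pi := by
        field_simp
      linarith [h2 ▸ h1]
    calc δ l * cot x ≤ δ l * (1 / x) := by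
          exact mul_le_mul_of_nonneg_left hcotle hδ0
      _ ≤ δ l * (2 * N / Real.pi) := mul_le_mul_of_nonneg_left hinv hδ0
      _ ≤ 1 := by
          rw [hδval, hNdef]
          rw [div_mul_div_comm, one_mul, div_le_one (by positivity)]
          have hprod2 : (0 : ℝ) ≤ (α - 1.38) * ((l : ℝ) * (A ^ 2 * Real.pi)) := by
            apply mul_nonneg
            · linarith
            · positivity
          have h1 : (l : ℝ) * (2 * C) ≤ (l : ℝ) * (1.38 * Real.pi * A ^ 2) :=
            mul_le_mul_of_nonneg_left hkey hl0.le
          linarith only [h1, hprod2]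
  · -- not summable: α = 0, δ = 0
    have hα : α = 0 := tsum_eq_zero_of_not_summable hs
    rw [δ, hα]
    simp

end Stmt12
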